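/- Let G = (V, E) be a finite simple graph with V nonempty. There exist (η, a) ∈ U^(1) and (ζ, b) ∈ U^(−1) with η + ζ = 0 and a + b = 0 if and only if all maximal cliques of G have the same size n and one of the following holds: (a) n = 1; (b) n = 2 and G has no chordless odd cycle of length at least 7; (c) n ≥ 3 and G has no chordless odd cycle of length at least 5. -/

import Mathlib

variable {V : Type*}

/-- A stable (independent) set of a graph. -/
def IsStableSet (G : SimpleGraph V) (S : Set V) : Prop :=
  ∀ u ∈ S, ∀ v ∈ S, ¬ G.Adj u v

/-- The vertex set of a cycle subgraph of `G`, given by an injective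
parametrization `c : ZMod m → V` (`m ≥ 3`) with consecutive vertices adjacent. -/
def IsCycleSet (G : SimpleGraph V) (C : Set V) : Prop :=
  ∃ (m : ℕ) (c : ZMod m → V), 3 ≤ m ∧ Function.Injective c ∧
    (∀ i, G.Adj (c i) (c (i + 1))) ∧ C = Set.range c

/-- The vertex set of an odd cycle subgraph of `G`. -/
def IsOddCycleSet (G : SimpleGraph V) (C : Set V) : Prop :=
  ∃ (m : ℕ) (c : ZMod m → V), 3 ≤ m ∧ Odd m ∧ Function.Injective c ∧
    (∀ i, G.Adj (c i) (c (i + 1))) ∧ C = Set.range c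

/-- The vertex set of a chordless odd cycle subgraph of `G`: the only edges of `G`
between vertices of the cycle are the cycle edges. -/
def IsChordlessOddCycleSet (G : SimpleGraph V) (C : Set V) : Prop :=
  ∃ (m : ℕ) (c : ZMod m → V), 3 ≤ m ∧ Odd m ∧ Function.Injective c ∧
    (∀ i, G.Adj (c i) (c (i + 1))) ∧
    (∀ i j, G.Adj (c i) (c j) → j = i + 1 ∨ i = j + 1) ∧
    C = Set.range c

/-- A maximal clique of `G`. -/
def IsMaximalClique (G : SimpleGraph V) (K : Set V) : Prop :=
  G.IsClique K ∧ ∀ K' : Set V, G.IsClique K' → K ⊆ K' → K = K'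

/-- Membership in HSTAB(G). -/
def memHSTAB (G : SimpleGraph V) (f : V → ℝ) : Prop :=
  (∀ x, 0 ≤ f x) ∧
  (∀ K : Set V, G.IsClique K → (∑ᶠ v ∈ K, f v) ≤ 1) ∧
  (∀ C : Set V, IsOddCycleSet G C → (∑ᶠ v ∈ C, f v) ≤ ((C.ncard : ℝ) - 1) / 2)

/-- Membership in TSTAB(G). -/
def memTSTAB (G : SimpleGraph V) (f : V → ℝ) : Prop :=
  (∀ x, 0 ≤ f x ∧ f x ≤ 1) ∧
  (∀ x y, G.Adj x y → f x + f y ≤ 1) ∧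
  (∀ C : Set V, IsOddCycleSet G C → (∑ᶠ v ∈ C, f v) ≤ ((C.ncard : ℝ) - 1) / 2)

/-- Membership in QSTAB(G). -/
def memQSTAB (G : SimpleGraph V) (f : V → ℝ) : Prop :=
  (∀ x, 0 ≤ f x) ∧
  (∀ K : Set V, G.IsClique K → (∑ᶠ v ∈ K, f v) ≤ 1)

/-- The stable set polytope STAB(G). -/
def STAB (G : SimpleGraph V) : Set (V → ℝ) :=
  convexHull ℝ {f : V → ℝ | ∃ S : Set V, IsStableSet G S ∧ f = S.indicator 1}

/-- The set `U^(n)` of the paper, as a predicate on pairs `(g, d)`. -/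
def memU (G : SimpleGraph V) (n : ℤ) (g : V → ℤ) (d : ℤ) : Prop :=
  (∀ v, n ≤ g v) ∧
  (∀ K : Set V, IsMaximalClique G K → (∑ᶠ v ∈ K, g v) ≤ d - n) ∧
  (∀ C : Set V, IsChordlessOddCycleSet G C → 5 ≤ C.ncard →
    2 * (∑ᶠ v ∈ C, g v) ≤ d * ((C.ncard : ℤ) - 1) - 2 * n)

/-- existence of `(η, a) ∈ U^(1)` and `(ζ, b) ∈ U^(-1)` with
`η + ζ = 0`, `a + b = 0` is equivalent to all maximal cliques having the same
size `n` with `n = 1`, or `n = 2` and no chordless odd cycle of length ≥ 7, or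
`n ≥ 3` and no chordless odd cycle of length ≥ 5. -/
lemma exists_maximal_clique [Fintype V] (G : SimpleGraph V) (S : Set V)
    (hS : G.IsClique S) : ∃ K, IsMaximalClique G K ∧ S ⊆ K := by
  obtain ⟨K, hK, hmax⟩ := Set.Finite.exists_maximalFor (fun K => K.ncard)
    {K | G.IsClique K ∧ S ⊆ K} (Set.toFinite _) ⟨S, hS, subset_rfl⟩
  refine ⟨K, ⟨hK.1, fun K' hK' hsub => ?_⟩, hK.2⟩
  have h1 : K.ncard ≤ K'.ncard := Set.ncard_le_ncard hsub (Set.toFinite _)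
  have := hmax (j := K') ⟨hK', hK.2.trans hsub⟩ h1
  exact Set.eq_of_subset_of_ncard_le hsub this (Set.toFinite _)

lemma finsum_mem_const' [Fintype V] (s : Set V) (c : ℤ) :
    (∑ᶠ v ∈ s, c) = (s.ncard : ℤ) * c := by
  rw [← Set.Finite.coe_toFinset (Set.toFinite s), finsum_mem_coe_finset]
  rw [Finset.sum_const, Set.ncard_eq_toFinset_card']
  simp [mul_comm]

lemma ncard_range_zmod {m : ℕ} (hm : 3 ≤ m) (c : ZMod m → V) (hc : Function.Injective c) :
    (Set.range c).ncard = m := by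
  have : NeZero m := ⟨by omega⟩
  rw [← Nat.card_coe_set_eq, Nat.card_range_of_injective hc, Nat.card_zmod]

lemma ncard_of_icocs {G : SimpleGraph V} {C : Set V} (hC : IsChordlessOddCycleSet G C) :
    ∃ m : ℕ, 3 ≤ m ∧ Odd m ∧ C.ncard = m := by
  obtain ⟨m, c, hm, hodd, hinj, -, -, rfl⟩ := hC
  exact ⟨m, hm, hodd, ncard_range_zmod hm c hinj⟩

lemma no_cycle_of_cliques_one [Fintype V] {G : SimpleGraph V}
    (h : ∀ K : Set V, IsMaximalClique G K → K.ncard = 1)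
    {C : Set V} (hC : IsChordlessOddCycleSet G C) : False := by
  obtain ⟨m, c, hm, -, hinj, hadj, -, -⟩ := hC
  have : NeZero m := ⟨by omega⟩
  have hA := hadj 0
  have hclique : G.IsClique {c 0, c (0 + 1)} := by
    intro x hx y hy hxy
    rcases hx with rfl | rfl <;> rcases hy with rfl | rfl
    · exact absurd rfl hxy
    · exact hA
    · exact hA.symm
    · exact absurd rfl hxy
  obtain ⟨K, hK, hsub⟩ := exists_maximal_clique G _ hclique
  have hp : ({c 0, c (0 + 1)} : Set V).ncard = 2 := Set.ncard_pair (G.ne_of_adj hA)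
  have h2 : 2 ≤ K.ncard := hp ▸ Set.ncard_le_ncard hsub (Set.toFinite _)
  have := h K hK
  omega


theorem stmt4 {V : Type*} [Fintype V] [Nonempty V] (G : SimpleGraph V) :
    (∃ (η ζ : V → ℤ) (a b : ℤ),
        memU G 1 η a ∧ memU G (-1) ζ b ∧ η + ζ = 0 ∧ a + b = 0) ↔
      (∃ n : ℕ, (∀ K : Set V, IsMaximalClique G K → K.ncard = n) ∧
        (n = 1 ∨
         (n = 2 ∧ ¬ ∃ C : Set V, IsChordlessOddCycleSet G C ∧ 7 ≤ C.ncard) ∨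
         (3 ≤ n ∧ ¬ ∃ C : Set V, IsChordlessOddCycleSet G C ∧ 5 ≤ C.ncard))) := by
  constructor
  · rintro ⟨η, ζ, a, b, hη, hζ, hsum, hab⟩
    have hζeq : ∀ v, ζ v = -η v := fun v => by
      have := congrFun hsum v; simp only [Pi.add_apply, Pi.zero_apply] at this; linarith
    have hb : b = -a := by linarith
    have hη1 : ∀ v, η v = 1 := fun v =>
      le_antisymm (by have := hζ.1 v; rw [hζeq v] at this; linarith) (hη.1 v)
    have hsumη : ∀ s : Set V, (∑ᶠ v ∈ s, η v) = (s.ncard : ℤ) := fun s => by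
      rw [finsum_mem_congr rfl (fun v _ => hη1 v), finsum_mem_const']; ring
    have hsumζ : ∀ s : Set V, (∑ᶠ v ∈ s, ζ v) = -(s.ncard : ℤ) := fun s => by
      rw [finsum_mem_congr rfl (fun v _ => by rw [hζeq v, hη1 v]), finsum_mem_const']; ring
    have hKcard : ∀ K : Set V, IsMaximalClique G K → (K.ncard : ℤ) = a - 1 := by
      intro K hK
      have h1 := hη.2.1 K hK
      have h2 := hζ.2.1 K hK
      rw [hsumη] at h1; rw [hsumζ] at h2
      omega
    obtain ⟨v⟩ := ‹Nonempty V›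
    have hsingle : G.IsClique {v} := by intro x hx y hy hxy; simp_all
    obtain ⟨K0, hK0, hvK0⟩ := exists_maximal_clique G {v} hsingle
    have hK0pos : 0 < K0.ncard := by
      rw [Set.ncard_pos (Set.toFinite _)]; exact ⟨v, hvK0 rfl⟩
    have ha2 : 2 ≤ a := by have := hKcard K0 hK0; omega
    refine ⟨(a - 1).toNat, fun K hK => ?_, ?_⟩
    · have := hKcard K hK; omega
    · -- cycle bound from ζ side: a * (m - 1) ≤ 2 * m + 2
      have hcyc : ∀ C : Set V, IsChordlessOddCycleSet G C → 5 ≤ C.ncard →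
          a * ((C.ncard : ℤ) - 1) ≤ 2 * (C.ncard : ℤ) + 2 := by
        intro C hC h5
        have h2 := hζ.2.2 C hC h5
        rw [hsumζ] at h2
        have : (5 : ℤ) ≤ (C.ncard : ℤ) := by exact_mod_cast h5
        nlinarith
      rcases (by omega : a = 2 ∨ a = 3 ∨ 4 ≤ a) with ha | ha | ha
      · -- n = 1 : left
        left; omega
      · right; left
        refine ⟨by omega, ?_⟩
        rintro ⟨C, hC, h7⟩
        have := hcyc C hC (by omega)
        have h7' : (7 : ℤ) ≤ (C.ncard : ℤ) := by exact_mod_cast h7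
        subst ha; linarith
      · right; right
        refine ⟨by omega, ?_⟩
        rintro ⟨C, hC, h5⟩
        have := hcyc C hC h5
        have h5' : (5 : ℤ) ≤ (C.ncard : ℤ) := by exact_mod_cast h5
        nlinarith
  · rintro ⟨n, hn, hcase⟩
    refine ⟨fun _ => 1, fun _ => -1, (n : ℤ) + 1, -((n : ℤ) + 1), ?_, ?_, by funext v; simp, by ring⟩
    · refine ⟨fun v => le_refl 1, fun K hK => ?_, fun C hC h5 => ?_⟩
      · rw [finsum_mem_const', hn K hK]; ring_nf; omega
      · rw [finsum_mem_const']
        rcases hcase with h1 | ⟨h2, hno7⟩ | ⟨h3, hno5⟩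
        · exact absurd hC (by subst h1; exact fun hC => no_cycle_of_cliques_one hn hC)
        · obtain ⟨m, hm3, hodd, hm⟩ := ncard_of_icocs hC
          have : C.ncard = 5 := by
            have h7 : ¬ 7 ≤ C.ncard := fun h => hno7 ⟨C, hC, h⟩
            rw [Nat.odd_iff] at hodd; omega
          rw [this]; subst h2; norm_num
        · exact absurd ⟨C, hC, h5⟩ hno5
    · refine ⟨fun v => le_refl (-1), fun K hK => ?_, fun C hC h5 => ?_⟩
      · rw [finsum_mem_const', hn K hK]; ring_nf; omega
      · rw [finsum_mem_const']
        rcases hcase with h1 | ⟨h2, hno7⟩ | ⟨h3, hno5⟩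
        · exact absurd hC (by subst h1; exact fun hC => no_cycle_of_cliques_one hn hC)
        · obtain ⟨m, hm3, hodd, hm⟩ := ncard_of_icocs hC
          have : C.ncard = 5 := by
            have h7 : ¬ 7 ≤ C.ncard := fun h => hno7 ⟨C, hC, h⟩
            rw [Nat.odd_iff] at hodd; omega
          rw [this]; subst h2; norm_num
        · exact absurd ⟨C, hC, h5⟩ hno5
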